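/- Let X, Y, Z be random variables taking values in [0,1]^d, [0,1], and [0,1]^{d'} respectively, with X and Y conditionally independent given Z (the null hypothesis H₀). Let 𝒫_n, 𝒬_n, 𝓡_n be finite cubic partitions of [0,1]^d, [0,1], [0,1]^{d'} into cubes of common side length h_n. Suppose the conditional distribution P_{X|Z=z} has density p(·|z) with respect to P_X and, with C_n(z) denoting the cell of 𝓡_n containing z, Condition 1 holds: ∫∫ |p(x|z) − (∫_{C_n(z)} p(x|z') P_Z(dz')) / P_Z(C_n(z))| P_X(dx) P_Z(dz) ≤ C* h_n. Then the deterministic approximation error satisfies Σ_{A ∈ 𝒫_n, B ∈ 𝒬_n, C ∈ 𝓡_n} |P_{XYZ}(A × B × C) − P_{XZ}(A × C) · P_{YZ}(B × C) / P_Z(C)| ≤ C* h_n (with the convention that terms with P_Z(C) = 0 vanish). -/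

import Mathlib

open MeasureTheory ProbabilityTheory Real
open scoped ENNReal

/-- The cube of side `h` of the grid `h·ℤ^d` indexed by `k ∈ ℤ^d`:
`∏_i [k_i h, (k_i+1) h)`. -/
def cellPi (d : ℕ) (h : ℝ) (k : Fin d → ℤ) : Set (Fin d → ℝ) :=
  {x | ∀ i, (k i : ℝ) * h ≤ x i ∧ x i < ((k i : ℝ) + 1) * h}

/-- The interval `[k h, (k+1) h)` of the grid of side `h` on `ℝ`. -/
def cell1 (h : ℝ) (k : ℤ) : Set ℝ := Set.Ico ((k : ℝ) * h) (((k : ℝ) + 1) * h)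

/-- `C_n(z)`: the grid cell of side `h` containing `z`. -/
noncomputable def cellOf (d' : ℕ) (h : ℝ) (z : Fin d' → ℝ) : Set (Fin d' → ℝ) :=
  cellPi d' h (fun i => ⌊z i / h⌋)

lemma mem_cellPi_iff {d : ℕ} {h : ℝ} (hh : 0 < h) {k : Fin d → ℤ} {z : Fin d → ℝ} :
    z ∈ cellPi d h k ↔ (fun i => ⌊z i / h⌋) = k := by
  simp only [cellPi, Set.mem_setOf_eq, funext_iff]
  refine forall_congr' fun i => ?_
  rw [Int.floor_eq_iff, le_div_iff₀ hh, div_lt_iff₀ hh]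

lemma measurableSet_cellPi (d : ℕ) (h : ℝ) (k : Fin d → ℤ) : MeasurableSet (cellPi d h k) := by
  have : cellPi d h k
      = ⋂ i, (fun x : Fin d → ℝ => x i) ⁻¹' Set.Ico ((k i : ℝ) * h) (((k i : ℝ) + 1) * h) := by
    ext x; simp [cellPi, Set.mem_iInter, Set.mem_Ico]
  rw [this]
  exact MeasurableSet.iInter fun i => (measurable_pi_apply i) measurableSet_Ico

lemma cellPi_disjoint {d : ℕ} {h : ℝ} (hh : 0 < h) {k k' : Fin d → ℤ} (hkk : k ≠ k') :
    Disjoint (cellPi d h k) (cellPi d h k') := by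
  rw [Set.disjoint_left]
  intro z hz hz'
  rw [mem_cellPi_iff hh] at hz hz'
  exact hkk (hz ▸ hz')

lemma cellOf_eq {d : ℕ} {h : ℝ} (hh : 0 < h) {k : Fin d → ℤ} {z : Fin d → ℝ}
    (hz : z ∈ cellPi d h k) : cellOf d h z = cellPi d h k := by
  rw [mem_cellPi_iff hh] at hz
  rw [cellOf, hz]

lemma cell1_disjoint {h : ℝ} (hh : 0 < h) {k k' : ℤ} (hkk : k ≠ k') :
    Disjoint (cell1 h k) (cell1 h k') := by
  rw [Set.disjoint_left]
  intro z hz hz'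
  simp only [cell1, Set.mem_Ico] at hz hz'
  apply hkk
  have h1 : ⌊z / h⌋ = k := by
    rw [Int.floor_eq_iff, le_div_iff₀ hh, div_lt_iff₀ hh]
    exact ⟨hz.1, hz.2⟩
  have h2 : ⌊z / h⌋ = k' := by
    rw [Int.floor_eq_iff, le_div_iff₀ hh, div_lt_iff₀ hh]
    exact ⟨hz'.1, hz'.2⟩
  rw [← h1, h2]

/-- Under the null hypothesis that `X` and `Y` are conditionally
independent given `Z`, and under Condition 1 (a Lipschitz-type condition on the density
`p(·|z)` of `P_{X|Z=z}` w.r.t. `P_X`), the deterministic approximation error satisfies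
`Σ_{A,B,C} |P_{XYZ}(A×B×C) − P_{XZ}(A×C) P_{YZ}(B×C) / P_Z(C)| ≤ C* h`. -/
theorem null_hypothesis_partition_error {Ω : Type*} [MeasurableSpace Ω] {d d' : ℕ}
    (μ : Measure Ω) [IsProbabilityMeasure μ]
    (X : Ω → (Fin d → ℝ)) (Y : Ω → ℝ) (Z : Ω → (Fin d' → ℝ))
    (hX : Measurable X) (hY : Measurable Y) (hZ : Measurable Z)
    (hXr : ∀ ω i, X ω i ∈ Set.Icc (0 : ℝ) 1) (hYr : ∀ ω, Y ω ∈ Set.Icc (0 : ℝ) 1)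
    (hZr : ∀ ω i, Z ω i ∈ Set.Icc (0 : ℝ) 1)
    (h : ℝ) (hh : 0 < h) (Cstar : ℝ)
    -- the null hypothesis: `X` and `Y` are conditionally independent given `Z`
    (hCI : ∀ A : Set (Fin d → ℝ), MeasurableSet A → ∀ B : Set ℝ, MeasurableSet B →
      (μ[fun ω => A.indicator (fun _ => (1 : ℝ)) (X ω) *
          B.indicator (fun _ => (1 : ℝ)) (Y ω) | MeasurableSpace.comap Z inferInstance])
        =ᵐ[μ]
      fun ω => (μ[fun ω' => A.indicator (fun _ => (1 : ℝ)) (X ω') |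
          MeasurableSpace.comap Z inferInstance]) ω *
        (μ[fun ω' => B.indicator (fun _ => (1 : ℝ)) (Y ω') |
          MeasurableSpace.comap Z inferInstance]) ω)
    -- `p(·|z)` is the density of `P_{X|Z=z}` with respect to `P_X`
    (p : (Fin d → ℝ) → (Fin d' → ℝ) → ℝ)
    (hp : Measurable (Function.uncurry p)) (hpnonneg : ∀ x z, 0 ≤ p x z)
    (hdens : ∀ᵐ z ∂(μ.map Z), condDistrib X Z μ z =
      (μ.map X).withDensity (fun x => ENNReal.ofReal (p x z)))
    -- Condition 1
    (hLip : (∫ z, ∫ x,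
        |p x z - (∫ z' in cellOf d' h z, p x z' ∂(μ.map Z)) /
          ((μ.map Z) (cellOf d' h z)).toReal| ∂(μ.map X) ∂(μ.map Z)) ≤ Cstar * h) :
    ∑' k : (Fin d → ℤ) × ℤ × (Fin d' → ℤ),
      |(μ (X ⁻¹' cellPi d h k.1 ∩ Y ⁻¹' cell1 h k.2.1 ∩ Z ⁻¹' cellPi d' h k.2.2)).toReal -
        (μ (X ⁻¹' cellPi d h k.1 ∩ Z ⁻¹' cellPi d' h k.2.2)).toReal *
          (μ (Y ⁻¹' cell1 h k.2.1 ∩ Z ⁻¹' cellPi d' h k.2.2)).toReal /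
          (μ (Z ⁻¹' cellPi d' h k.2.2)).toReal| ≤ Cstar * h := by
  classical
  set ν := μ.map Z with hνdef
  set ρ := μ.map X with hρdef
  haveI hνP : IsProbabilityMeasure ν := Measure.isProbabilityMeasure_map hZ.aemeasurable
  haveI hρP : IsProbabilityMeasure ρ := Measure.isProbabilityMeasure_map hX.aemeasurable
  set κ := condDistrib X Z μ with hκdef
  set η := condDistrib Y Z μ with hηdef
  -- the key identity
  have key : ∀ A : Set (Fin d → ℝ), MeasurableSet A → ∀ B : Set ℝ, MeasurableSet B →
      ∀ C : Set (Fin d' → ℝ), MeasurableSet C →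
      (μ (X ⁻¹' A ∩ Y ⁻¹' B ∩ Z ⁻¹' C)).toReal
        = ∫ z in C, (κ z A).toReal * (η z B).toReal ∂ν := by
    intro A hA B hB C hC
    have hm : MeasurableSpace.comap Z inferInstance ≤ (inferInstance : MeasurableSpace Ω) :=
      hZ.comap_le
    have hsm : MeasurableSet[MeasurableSpace.comap Z inferInstance] (Z ⁻¹' C) := ⟨C, hC, rfl⟩
    have hABmeas : MeasurableSet (X ⁻¹' A ∩ Y ⁻¹' B) := (hX hA).inter (hY hB)
    have hfeq : (fun ω => A.indicator (fun _ => (1 : ℝ)) (X ω) *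
        B.indicator (fun _ => (1 : ℝ)) (Y ω))
        = (X ⁻¹' A ∩ Y ⁻¹' B).indicator (fun _ => (1 : ℝ)) := by
      funext ω
      by_cases hx : X ω ∈ A <;> by_cases hy : Y ω ∈ B <;>
        simp [Set.indicator_apply, hx, hy]
    have hint : Integrable (fun ω => A.indicator (fun _ => (1 : ℝ)) (X ω) *
        B.indicator (fun _ => (1 : ℝ)) (Y ω)) μ := by
      rw [hfeq]; exact (integrable_const 1).indicator hABmeas
    have h1 : (μ (X ⁻¹' A ∩ Y ⁻¹' B ∩ Z ⁻¹' C)).toReal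
        = ∫ ω in Z ⁻¹' C, A.indicator (fun _ => (1 : ℝ)) (X ω) *
            B.indicator (fun _ => (1 : ℝ)) (Y ω) ∂μ := by
      rw [hfeq, setIntegral_indicator hABmeas, setIntegral_const, smul_eq_mul, mul_one,
        Set.inter_comm, measureReal_def]
    have h2 : ∫ ω in Z ⁻¹' C, A.indicator (fun _ => (1 : ℝ)) (X ω) *
            B.indicator (fun _ => (1 : ℝ)) (Y ω) ∂μ
        = ∫ ω in Z ⁻¹' C,
            (μ[fun ω' => A.indicator (fun _ => (1 : ℝ)) (X ω') |
              MeasurableSpace.comap Z inferInstance]) ω *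
            (μ[fun ω' => B.indicator (fun _ => (1 : ℝ)) (Y ω') |
              MeasurableSpace.comap Z inferInstance]) ω ∂μ := by
      rw [← setIntegral_condExp hm hint hsm]
      exact setIntegral_congr_ae (hZ hC) ((hCI A hA B hB).mono fun ω hω _ => hω)
    have hXind : (fun ω => A.indicator (fun _ => (1 : ℝ)) (X ω))
        = (X ⁻¹' A).indicator (fun _ => (1 : ℝ)) := by
      funext ω; by_cases hx : X ω ∈ A <;> simp [Set.indicator_apply, hx]
    have hYind : (fun ω => B.indicator (fun _ => (1 : ℝ)) (Y ω))
        = (Y ⁻¹' B).indicator (fun _ => (1 : ℝ)) := by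
      funext ω; by_cases hy : Y ω ∈ B <;> simp [Set.indicator_apply, hy]
    have hXc : (fun ω => (κ (Z ω) A).toReal)
        =ᵐ[μ] μ[fun ω' => A.indicator (fun _ => (1 : ℝ)) (X ω') |
          MeasurableSpace.comap Z inferInstance] := by
      rw [hXind]; exact condDistrib_ae_eq_condExp hZ hX hA
    have hYc : (fun ω => (η (Z ω) B).toReal)
        =ᵐ[μ] μ[fun ω' => B.indicator (fun _ => (1 : ℝ)) (Y ω') |
          MeasurableSpace.comap Z inferInstance] := by
      rw [hYind]; exact condDistrib_ae_eq_condExp hZ hY hB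
    have h3 : ∫ ω in Z ⁻¹' C,
            (μ[fun ω' => A.indicator (fun _ => (1 : ℝ)) (X ω') |
              MeasurableSpace.comap Z inferInstance]) ω *
            (μ[fun ω' => B.indicator (fun _ => (1 : ℝ)) (Y ω') |
              MeasurableSpace.comap Z inferInstance]) ω ∂μ
        = ∫ ω in Z ⁻¹' C, (κ (Z ω) A).toReal * (η (Z ω) B).toReal ∂μ := by
      refine setIntegral_congr_ae (hZ hC) ?_
      filter_upwards [hXc, hYc] with ω e1 e2 _
      rw [← e1, ← e2]
    have hmeas : Measurable fun z => (κ z A).toReal * (η z B).toReal :=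
      ((Kernel.measurable_coe _ hA).ennreal_toReal).mul
        ((Kernel.measurable_coe _ hB).ennreal_toReal)
    have h4 : ∫ z in C, (κ z A).toReal * (η z B).toReal ∂ν
        = ∫ ω in Z ⁻¹' C, (κ (Z ω) A).toReal * (η (Z ω) B).toReal ∂μ :=
      setIntegral_map hC hmeas.aestronglyMeasurable hZ.aemeasurable
    rw [h1, h2, h3, h4]
  have key2 : ∀ A : Set (Fin d → ℝ), MeasurableSet A → ∀ C : Set (Fin d' → ℝ), MeasurableSet C →
      (μ (X ⁻¹' A ∩ Z ⁻¹' C)).toReal = ∫ z in C, (κ z A).toReal ∂ν := by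
    intro A hA C hC
    have := key A hA Set.univ MeasurableSet.univ C hC
    simpa [measure_univ] using this
  have key3 : ∀ B : Set ℝ, MeasurableSet B → ∀ C : Set (Fin d' → ℝ), MeasurableSet C →
      (μ (Y ⁻¹' B ∩ Z ⁻¹' C)).toReal = ∫ z in C, (η z B).toReal ∂ν := by
    intro B hB C hC
    have := key Set.univ MeasurableSet.univ B hB C hC
    simpa [measure_univ] using this
  have key0 : ∀ C : Set (Fin d' → ℝ), MeasurableSet C → μ (Z ⁻¹' C) = ν C := by
    intro C hC
    rw [hνdef, Measure.map_apply hZ hC]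
  -- measurability of sections of p
  have hpm : ∀ z, Measurable fun x => p x z := fun z =>
    hp.comp (measurable_id.prodMk measurable_const)
  have hpzm : ∀ x, Measurable fun z' => p x z' := fun x =>
    hp.comp (measurable_const.prodMk measurable_id)
  -- density facts
  have P1 : ∀ᵐ z ∂ν, ∫⁻ x, ENNReal.ofReal (p x z) ∂ρ = 1 := by
    filter_upwards [hdens] with z hz
    have h1 : κ z Set.univ = 1 := measure_univ
    rw [hz] at h1
    rwa [withDensity_apply _ MeasurableSet.univ, Measure.restrict_univ] at h1
  have P2 : ∀ᵐ z ∂ν, ∀ A : Set (Fin d → ℝ), MeasurableSet A →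
      κ z A = ∫⁻ x in A, ENNReal.ofReal (p x z) ∂ρ := by
    filter_upwards [hdens] with z hz A hA
    rw [hz, withDensity_apply _ hA]
  have P3 : ∀ᵐ z ∂ν, Integrable (fun x => p x z) ρ ∧ (∀ A : Set (Fin d → ℝ), MeasurableSet A →
      ∫ x in A, p x z ∂ρ = (κ z A).toReal) ∧ ∫ x, p x z ∂ρ = 1 := by
    filter_upwards [P1, P2] with z h1 h2
    have hint : Integrable (fun x => p x z) ρ := by
      have := integrable_toReal_of_lintegral_ne_top
        ((hpm z).ennreal_ofReal.aemeasurable) (by rw [h1]; exact ENNReal.one_ne_top)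
      refine this.congr (Filter.Eventually.of_forall fun x => ?_)
      simp [ENNReal.toReal_ofReal (hpnonneg x z)]
    have hset : ∀ A : Set (Fin d → ℝ), MeasurableSet A →
        ∫ x in A, p x z ∂ρ = (κ z A).toReal := by
      intro A hA
      rw [h2 A hA, integral_eq_lintegral_of_nonneg_ae
        (Filter.Eventually.of_forall fun x => hpnonneg x z) ((hpm z).aestronglyMeasurable)]
    refine ⟨hint, hset, ?_⟩
    have := hset Set.univ MeasurableSet.univ
    simpa [measure_univ] using this
  -- the averaged density over a cell
  set Φ : (Fin d' → ℤ) → (Fin d → ℝ) → ℝ≥0∞ :=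
    fun c x => ∫⁻ z' in cellPi d' h c, ENNReal.ofReal (p x z') ∂ν with hΦdef
  have hpu : Measurable fun w : (Fin d → ℝ) × (Fin d' → ℝ) => ENNReal.ofReal (p w.1 w.2) :=
    hp.ennreal_ofReal
  have hΦmeas : ∀ c, Measurable (Φ c) := fun c =>
    Measurable.lintegral_prod_right' (f := fun w : (Fin d → ℝ) × (Fin d' → ℝ) =>
      ENNReal.ofReal (p w.1 w.2)) hpu
  have T1 : ∀ c, ∫⁻ x, Φ c x ∂ρ = ν (cellPi d' h c) := by
    intro c
    rw [hΦdef]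
    rw [lintegral_lintegral_swap (hpu.aemeasurable)]
    rw [lintegral_congr_ae (ae_restrict_of_ae P1), setLIntegral_one]
  have T1' : ∀ c, ∀ᵐ x ∂ρ, Φ c x < ∞ := fun c =>
    ae_lt_top (hΦmeas c) (by rw [T1 c]; exact measure_ne_top ν _)
  have T3 : ∀ c, Integrable (fun x => (Φ c x).toReal) ρ := fun c =>
    integrable_toReal_of_lintegral_ne_top (hΦmeas c).aemeasurable
      (by rw [T1 c]; exact measure_ne_top ν _)
  have T4 : ∀ c, ∀ A : Set (Fin d → ℝ), MeasurableSet A →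
      ∫ x in A, (Φ c x).toReal ∂ρ = ∫ z in cellPi d' h c, (κ z A).toReal ∂ν := by
    intro c A hA
    have e1 : ∫ x in A, (Φ c x).toReal ∂ρ = (∫⁻ x in A, Φ c x ∂ρ).toReal :=
      integral_toReal ((hΦmeas c).aemeasurable.restrict)
        (ae_restrict_of_ae (T1' c))
    have e2 : ∫⁻ x in A, Φ c x ∂ρ = ∫⁻ z in cellPi d' h c, κ z A ∂ν := by
      rw [hΦdef]
      simp only
      rw [lintegral_lintegral_swap (hpu.aemeasurable)]
      refine lintegral_congr_ae (ae_restrict_of_ae ?_)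
      filter_upwards [P2] with z h2
      exact (h2 A hA).symm
    have e3 : ∫ z in cellPi d' h c, (κ z A).toReal ∂ν
        = (∫⁻ z in cellPi d' h c, κ z A ∂ν).toReal :=
      integral_toReal ((Kernel.measurable_coe κ hA).aemeasurable.restrict)
        (Filter.Eventually.of_forall fun z => measure_lt_top _ _)
    rw [e1, e2, e3]
  -- the cell-averaged density and the function `e`
  set qq : (Fin d' → ℤ) → (Fin d → ℝ) → ℝ :=
    fun c x => (Φ c x).toReal / (ν (cellPi d' h c)).toReal with hqqdef
  have qqmeas : ∀ c, Measurable (qq c) := fun c => ((hΦmeas c).ennreal_toReal).div_const _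
  have qint : ∀ c, Integrable (qq c) ρ := fun c => (T3 c).div_const _
  have qnonneg : ∀ c x, 0 ≤ qq c x := fun c x =>
    div_nonneg ENNReal.toReal_nonneg ENNReal.toReal_nonneg
  have qtot : ∀ c, ∫ x, qq c x ∂ρ ≤ 1 := by
    intro c
    rw [hqqdef]
    simp only
    rw [integral_div]
    have e4 : ∫ x, (Φ c x).toReal ∂ρ = (ν (cellPi d' h c)).toReal := by
      have := T4 c Set.univ MeasurableSet.univ
      simp only [Measure.restrict_univ, measure_univ, ENNReal.toReal_one] at this
      rw [this, setIntegral_const, smul_eq_mul, mul_one, measureReal_def]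
    rw [e4]
    by_cases h0 : (ν (cellPi d' h c)).toReal = 0
    · rw [h0, div_zero]; norm_num
    · rw [div_self h0]
  have qrel : ∀ (x : Fin d → ℝ) (c : Fin d' → ℤ),
      ∫ z' in cellPi d' h c, p x z' ∂ν = (Φ c x).toReal := by
    intro x c
    rw [integral_eq_lintegral_of_nonneg_ae (Filter.Eventually.of_forall fun z' => hpnonneg x z')
      ((hpzm x).aestronglyMeasurable)]
  set fl : (Fin d' → ℝ) → (Fin d' → ℤ) := fun z i => ⌊z i / h⌋ with hfldef
  have flmeas : Measurable fl := measurable_pi_lambda _ fun i =>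
    (show Measurable fun z : Fin d' → ℝ => ⌊z i / h⌋ by fun_prop)
  set e : (Fin d' → ℝ) → ℝ := fun z => ∫ x, |p x z - qq (fl z) x| ∂ρ with hedef
  have hLip' : ∫ z, e z ∂ν ≤ Cstar * h := by
    refine le_trans (le_of_eq ?_) hLip
    refine integral_congr_ae (Filter.Eventually.of_forall fun z => ?_)
    refine integral_congr_ae (Filter.Eventually.of_forall fun x => ?_)
    simp only
    rw [show cellOf d' h z = cellPi d' h (fl z) from rfl, qrel x (fl z), hqqdef]
  have qumeas : Measurable fun w : (Fin d → ℝ) × (Fin d' → ℤ) => qq w.2 w.1 :=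
    measurable_from_prod_countable_left fun c => qqmeas c
  have emeas : StronglyMeasurable e := by
    have efmeas : StronglyMeasurable fun w : (Fin d' → ℝ) × (Fin d → ℝ) =>
        |p w.2 w.1 - qq (fl w.1) w.2| :=
      (((hp.comp measurable_swap).sub
        (qumeas.comp (measurable_snd.prodMk (flmeas.comp measurable_fst)))).abs).stronglyMeasurable
    rw [hedef]
    exact efmeas.integral_prod_right'
  have enonneg : ∀ z, 0 ≤ e z := fun z => integral_nonneg fun x => abs_nonneg _
  have P3' : ∀ᵐ z ∂ν, Integrable (fun x => p x z) ρ ∧ (∀ A : Set (Fin d → ℝ), MeasurableSet A →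
      ∫ x in A, p x z ∂ρ = (κ z A).toReal) ∧ ∫ x, p x z ∂ρ = 1 ∧
      ∀ c, ∫ x, |p x z - qq c x| ∂ρ ≤ 2 := by
    filter_upwards [P3] with z hz
    refine ⟨hz.1, hz.2.1, hz.2.2, fun c => ?_⟩
    calc ∫ x, |p x z - qq c x| ∂ρ ≤ ∫ x, (p x z + qq c x) ∂ρ := by
          refine integral_mono ((hz.1.sub (qint c)).abs) (hz.1.add (qint c)) fun x => ?_
          refine (abs_sub _ _).trans_eq ?_
          rw [abs_of_nonneg (hpnonneg x z), abs_of_nonneg (qnonneg c x)]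
      _ = 1 + ∫ x, qq c x ∂ρ := by rw [integral_add hz.1 (qint c), hz.2.2]
      _ ≤ 2 := by linarith [qtot c]
  have ebound : ∀ᵐ z ∂ν, ‖e z‖ ≤ 2 := by
    filter_upwards [P3'] with z hz
    rw [Real.norm_eq_abs, abs_of_nonneg (enonneg z)]
    exact hz.2.2.2 (fl z)
  have eint : Integrable e ν := Integrable.mono' (integrable_const 2)
    emeas.aestronglyMeasurable ebound
  -- the summand
  set T : (Fin d → ℤ) × ℤ × (Fin d' → ℤ) → ℝ := fun k =>
    |(μ (X ⁻¹' cellPi d h k.1 ∩ Y ⁻¹' cell1 h k.2.1 ∩ Z ⁻¹' cellPi d' h k.2.2)).toReal -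
      (μ (X ⁻¹' cellPi d h k.1 ∩ Z ⁻¹' cellPi d' h k.2.2)).toReal *
        (μ (Y ⁻¹' cell1 h k.2.1 ∩ Z ⁻¹' cellPi d' h k.2.2)).toReal /
        (μ (Z ⁻¹' cellPi d' h k.2.2)).toReal| with hTdef
  have hCstar : 0 ≤ Cstar * h :=
    le_trans (integral_nonneg fun z => integral_nonneg fun x => abs_nonneg _) hLip
  refine tsum_le_of_sum_le' hCstar ?_
  intro s
  set sA := s.image Prod.fst with hsAdef
  set sB := (s.image Prod.snd).image Prod.fst with hsBdef
  set sC := (s.image Prod.snd).image Prod.snd with hsCdef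
  have hsub : s ⊆ sA ×ˢ sB ×ˢ sC := by
    intro k hk
    simp only [Finset.mem_product]
    exact ⟨Finset.mem_image_of_mem _ hk,
      Finset.mem_image_of_mem _ (Finset.mem_image_of_mem _ hk),
      Finset.mem_image_of_mem _ (Finset.mem_image_of_mem _ hk)⟩
  have step1 : ∑ k ∈ s, T k ≤ ∑ k ∈ sA ×ˢ sB ×ˢ sC, T k :=
    Finset.sum_le_sum_of_subset_of_nonneg hsub fun k _ _ => abs_nonneg _
  have step2 : ∑ k ∈ sA ×ˢ sB ×ˢ sC, T k
      = ∑ c ∈ sC, ∑ a ∈ sA, ∑ b ∈ sB, T (a, b, c) := by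
    rw [Finset.sum_product]
    have e5 : ∀ a, ∑ y ∈ sB ×ˢ sC, T (a, y) = ∑ c ∈ sC, ∑ b ∈ sB, T (a, b, c) := by
      intro a; rw [Finset.sum_product, Finset.sum_comm]
    simp_rw [e5]
    rw [Finset.sum_comm]
  have main : ∀ c : Fin d' → ℤ, ∑ a ∈ sA, ∑ b ∈ sB, T (a, b, c)
      ≤ ∫ z in cellPi d' h c, e z ∂ν := by
    intro c
    have hCm : MeasurableSet (cellPi d' h c) := measurableSet_cellPi d' h c
    by_cases hν0 : ν (cellPi d' h c) = 0
    · have hz0 : μ (Z ⁻¹' cellPi d' h c) = 0 := by rw [key0 _ hCm, hν0]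
      have hT0 : ∀ a b, T (a, b, c) = 0 := by
        intro a b
        have e1 : μ (X ⁻¹' cellPi d h a ∩ Y ⁻¹' cell1 h b ∩ Z ⁻¹' cellPi d' h c) = 0 :=
          measure_mono_null Set.inter_subset_right hz0
        have e2 : μ (X ⁻¹' cellPi d h a ∩ Z ⁻¹' cellPi d' h c) = 0 :=
          measure_mono_null Set.inter_subset_right hz0
        have e3 : μ (Y ⁻¹' cell1 h b ∩ Z ⁻¹' cellPi d' h c) = 0 :=
          measure_mono_null Set.inter_subset_right hz0
        simp only [hTdef, e1, e2, e3, ENNReal.toReal_zero, zero_mul, zero_div, sub_zero,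
          abs_zero]
      calc ∑ a ∈ sA, ∑ b ∈ sB, T (a, b, c) = 0 := by
            simp only [hT0, Finset.sum_const_zero]
        _ ≤ ∫ z in cellPi d' h c, e z ∂ν :=
            setIntegral_nonneg hCm fun z _ => enonneg z
    · have hνCt : (ν (cellPi d' h c)).toReal ≠ 0 :=
        ENNReal.toReal_ne_zero.mpr ⟨hν0, measure_ne_top ν _⟩
      have qcint : Integrable (qq c) ρ := qint c
      have qcmeas : Measurable (qq c) := qqmeas c
      have hiqcA : ∀ A : Set (Fin d → ℝ), MeasurableSet A →
          ∫ x in A, qq c x ∂ρ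
            = (∫ z in cellPi d' h c, (κ z A).toReal ∂ν) / (ν (cellPi d' h c)).toReal := by
        intro A hA
        rw [hqqdef]
        simp only
        rw [integral_div, T4 c A hA]
      set m : (Fin d → ℤ) → (Fin d' → ℝ) → ℝ :=
        fun a z => ∫ x in cellPi d h a, |p x z - qq c x| ∂ρ with hmdef
      have mnn : ∀ a z, 0 ≤ m a z := fun a z => integral_nonneg fun x => abs_nonneg _
      have mmeas : ∀ a, StronglyMeasurable (m a) := by
        intro a
        have e6 : StronglyMeasurable fun w : (Fin d' → ℝ) × (Fin d → ℝ) =>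
            |p w.2 w.1 - qq c w.2| :=
          (((hp.comp measurable_swap).sub (qcmeas.comp measurable_snd)).abs).stronglyMeasurable
        exact e6.integral_prod_right'
      have mint : ∀ a, Integrable (m a) (ν.restrict (cellPi d' h c)) := by
        intro a
        refine Integrable.mono' (integrable_const 2) (mmeas a).aestronglyMeasurable ?_
        refine ae_restrict_of_ae ?_
        filter_upwards [P3'] with z hz
        rw [Real.norm_eq_abs, abs_of_nonneg (mnn a z)]
        exact le_trans (setIntegral_le_integral ((hz.1.sub qcint).abs)
          (Filter.Eventually.of_forall fun x => abs_nonneg _)) (hz.2.2.2 c)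
      have Gmeas : ∀ b : ℤ, Measurable fun z => (η z (cell1 h b)).toReal := fun b =>
        (Kernel.measurable_coe _ measurableSet_Ico).ennreal_toReal
      have Gnn : ∀ (b : ℤ) z, 0 ≤ (η z (cell1 h b)).toReal := fun b z => ENNReal.toReal_nonneg
      have Gle1 : ∀ (b : ℤ) z, (η z (cell1 h b)).toReal ≤ 1 := fun b z => by
        simpa using ENNReal.toReal_mono ENNReal.one_ne_top (prob_le_one (μ := η z))
      have intMG : ∀ a (b : ℤ), Integrable (fun z => m a z * (η z (cell1 h b)).toReal)
          (ν.restrict (cellPi d' h c)) := by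
        intro a b
        refine Integrable.mono' (mint a)
          (((mmeas a).mul (Gmeas b).stronglyMeasurable).aestronglyMeasurable) ?_
        refine Filter.Eventually.of_forall fun z => ?_
        rw [Real.norm_eq_abs, abs_of_nonneg (mul_nonneg (mnn a z) (Gnn b z))]
        calc m a z * (η z (cell1 h b)).toReal ≤ m a z * 1 :=
              mul_le_mul_of_nonneg_left (Gle1 b z) (mnn a z)
          _ = m a z := mul_one _
      have claim1 : ∀ (a : Fin d → ℤ) (b : ℤ), T (a, b, c)
          ≤ ∫ z in cellPi d' h c, m a z * (η z (cell1 h b)).toReal ∂ν := by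
        intro a b
        have hAm : MeasurableSet (cellPi d h a) := measurableSet_cellPi d h a
        have hBm : MeasurableSet (cell1 h b) := measurableSet_Ico
        set FA : (Fin d' → ℝ) → ℝ := fun z => (κ z (cellPi d h a)).toReal with hFAdef
        set GB : (Fin d' → ℝ) → ℝ := fun z => (η z (cell1 h b)).toReal with hGBdef
        have FAmeas : Measurable FA := (Kernel.measurable_coe _ hAm).ennreal_toReal
        have FAnn : ∀ z, 0 ≤ FA z := fun z => ENNReal.toReal_nonneg
        have FAle1 : ∀ z, FA z ≤ 1 := fun z => by
          rw [hFAdef]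
          simpa using ENNReal.toReal_mono ENNReal.one_ne_top (prob_le_one (μ := κ z))
        set QA : ℝ := (∫ z in cellPi d' h c, FA z ∂ν) / (ν (cellPi d' h c)).toReal with hQAdef
        have hT : T (a, b, c) = |(∫ z in cellPi d' h c, FA z * GB z ∂ν) -
            (∫ z in cellPi d' h c, FA z ∂ν) * (∫ z in cellPi d' h c, GB z ∂ν) /
              (ν (cellPi d' h c)).toReal| := by
          rw [hTdef]
          simp only
          rw [key _ hAm _ hBm _ hCm, key2 _ hAm _ hCm, key3 _ hBm _ hCm, key0 _ hCm]
        have intF : Integrable FA (ν.restrict (cellPi d' h c)) := by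
          refine Integrable.mono' (integrable_const 1) FAmeas.aestronglyMeasurable
            (Filter.Eventually.of_forall fun z => ?_)
          rw [Real.norm_eq_abs, abs_of_nonneg (FAnn z)]; exact FAle1 z
        have intG : Integrable GB (ν.restrict (cellPi d' h c)) := by
          refine Integrable.mono' (integrable_const 1) (Gmeas b).aestronglyMeasurable
            (Filter.Eventually.of_forall fun z => ?_)
          rw [Real.norm_eq_abs, abs_of_nonneg (Gnn b z)]; exact Gle1 b z
        have intFG : Integrable (fun z => FA z * GB z) (ν.restrict (cellPi d' h c)) := by
          refine Integrable.mono' (integrable_const 1)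
            ((FAmeas.mul (Gmeas b)).aestronglyMeasurable)
            (Filter.Eventually.of_forall fun z => ?_)
          rw [Real.norm_eq_abs, abs_of_nonneg (mul_nonneg (FAnn z) (Gnn b z))]
          calc FA z * GB z ≤ 1 * 1 :=
                mul_le_mul (FAle1 z) (Gle1 b z) (Gnn b z) zero_le_one
            _ = 1 := mul_one 1
        have intDiff : Integrable (fun z => (FA z - QA) * GB z)
            (ν.restrict (cellPi d' h c)) := by
          refine (intFG.sub (intG.const_mul QA)).congr
            (Filter.Eventually.of_forall fun z => ?_)
          simp only [Pi.sub_apply]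
          ring
        have hsplit : (∫ z in cellPi d' h c, FA z ∂ν) * (∫ z in cellPi d' h c, GB z ∂ν) /
            (ν (cellPi d' h c)).toReal = ∫ z in cellPi d' h c, QA * GB z ∂ν := by
          rw [integral_const_mul, hQAdef, mul_div_right_comm]
        have hdiff : (∫ z in cellPi d' h c, FA z * GB z ∂ν) -
            ∫ z in cellPi d' h c, QA * GB z ∂ν
            = ∫ z in cellPi d' h c, (FA z - QA) * GB z ∂ν := by
          rw [← integral_sub intFG (intG.const_mul QA)]
          refine integral_congr_ae (Filter.Eventually.of_forall fun z => ?_)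
          ring
        have hptwise : ∀ᵐ z ∂(ν.restrict (cellPi d' h c)),
            |(FA z - QA) * GB z| ≤ m a z * GB z := by
          refine ae_restrict_of_ae ?_
          filter_upwards [P3'] with z hz
          have hFA : FA z = ∫ x in cellPi d h a, p x z ∂ρ := (hz.2.1 _ hAm).symm
          have hQA : QA = ∫ x in cellPi d h a, qq c x ∂ρ := by
            rw [hiqcA _ hAm, hQAdef]
          have e7 : FA z - QA = ∫ x in cellPi d h a, (p x z - qq c x) ∂ρ := by
            rw [hFA, hQA, integral_sub hz.1.integrableOn qcint.integrableOn]
          rw [abs_mul, abs_of_nonneg (Gnn b z), e7]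
          refine mul_le_mul_of_nonneg_right ?_ (Gnn b z)
          calc |∫ x in cellPi d h a, (p x z - qq c x) ∂ρ|
              ≤ ∫ x in cellPi d h a, |p x z - qq c x| ∂ρ := by
                simpa only [Real.norm_eq_abs] using norm_integral_le_integral_norm
                  (f := fun x => p x z - qq c x) (μ := ρ.restrict (cellPi d h a))
            _ = m a z := rfl
        calc T (a, b, c) = |∫ z in cellPi d' h c, (FA z - QA) * GB z ∂ν| := by
              rw [hT, hsplit, hdiff]
          _ ≤ ∫ z in cellPi d' h c, |(FA z - QA) * GB z| ∂ν := by
              simpa only [Real.norm_eq_abs] using norm_integral_le_integral_norm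
                (f := fun z => (FA z - QA) * GB z) (μ := ν.restrict (cellPi d' h c))
          _ ≤ ∫ z in cellPi d' h c, m a z * GB z ∂ν :=
              integral_mono_ae intDiff.abs (intMG a b) hptwise
      have hGsum : ∀ z, ∑ b ∈ sB, (η z (cell1 h b)).toReal ≤ 1 := by
        intro z
        have hdis : (sB : Set ℤ).PairwiseDisjoint fun b => cell1 h b :=
          fun b _ b' _ hne => cell1_disjoint hh hne
        have e1 : ∑ b ∈ sB, η z (cell1 h b) = η z (⋃ b ∈ sB, cell1 h b) :=
          (measure_biUnion_finset hdis fun b _ => measurableSet_Ico).symm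
        calc ∑ b ∈ sB, (η z (cell1 h b)).toReal
            = (∑ b ∈ sB, η z (cell1 h b)).toReal :=
              (ENNReal.toReal_sum fun b _ => measure_ne_top _ _).symm
          _ ≤ 1 := by
              rw [e1]
              simpa using ENNReal.toReal_mono ENNReal.one_ne_top (prob_le_one (μ := η z))
      have claim2 : ∀ a : Fin d → ℤ, ∑ b ∈ sB, T (a, b, c)
          ≤ ∫ z in cellPi d' h c, m a z ∂ν := by
        intro a
        calc ∑ b ∈ sB, T (a, b, c)
            ≤ ∑ b ∈ sB, ∫ z in cellPi d' h c, m a z * (η z (cell1 h b)).toReal ∂ν :=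
              Finset.sum_le_sum fun b _ => claim1 a b
          _ = ∫ z in cellPi d' h c, ∑ b ∈ sB, m a z * (η z (cell1 h b)).toReal ∂ν :=
              (integral_finset_sum sB fun b _ => intMG a b).symm
          _ ≤ ∫ z in cellPi d' h c, m a z ∂ν := by
              refine integral_mono (integrable_finset_sum sB fun b _ => intMG a b)
                (mint a) fun z => ?_
              rw [← Finset.mul_sum]
              calc m a z * ∑ b ∈ sB, (η z (cell1 h b)).toReal ≤ m a z * 1 :=
                    mul_le_mul_of_nonneg_left (hGsum z) (mnn a z)
                _ = m a z := mul_one _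
      have claim3 : ∑ a ∈ sA, ∫ z in cellPi d' h c, m a z ∂ν
          ≤ ∫ z in cellPi d' h c, e z ∂ν := by
        rw [← integral_finset_sum sA fun a _ => mint a]
        refine integral_mono_ae (integrable_finset_sum sA fun a _ => mint a)
          eint.integrableOn ?_
        have hae : ∀ᵐ z ∂(ν.restrict (cellPi d' h c)), z ∈ cellPi d' h c :=
          ae_restrict_mem hCm
        have hae2 := ae_restrict_of_ae (μ := ν) (s := cellPi d' h c) P3'
        filter_upwards [hae, hae2] with z hzC hz
        have hdisA : (sA : Set (Fin d → ℤ)).PairwiseDisjoint fun a => cellPi d h a :=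
          fun a _ a' _ hne => cellPi_disjoint hh hne
        have e1 : ∑ a ∈ sA, m a z
            = ∫ x in ⋃ a ∈ sA, cellPi d h a, |p x z - qq c x| ∂ρ :=
          (integral_biUnion_finset sA (fun a _ => measurableSet_cellPi d h a) hdisA
            (fun a _ => ((hz.1.sub qcint).abs).integrableOn)).symm
        have e2 : ∫ x in ⋃ a ∈ sA, cellPi d h a, |p x z - qq c x| ∂ρ
            ≤ ∫ x, |p x z - qq c x| ∂ρ :=
          setIntegral_le_integral ((hz.1.sub qcint).abs)
            (Filter.Eventually.of_forall fun x => abs_nonneg _)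
        have e3 : e z = ∫ x, |p x z - qq c x| ∂ρ := by
          have hflz : fl z = c := (mem_cellPi_iff hh).mp hzC
          rw [hedef]
          simp only
          rw [hflz]
        rw [e3]
        exact le_of_le_of_eq (le_of_eq e1) rfl |>.trans e2
      calc ∑ a ∈ sA, ∑ b ∈ sB, T (a, b, c) ≤ ∑ a ∈ sA, ∫ z in cellPi d' h c, m a z ∂ν :=
            Finset.sum_le_sum fun a _ => claim2 a
        _ ≤ ∫ z in cellPi d' h c, e z ∂ν := claim3
  calc ∑ k ∈ s, T k ≤ ∑ k ∈ sA ×ˢ sB ×ˢ sC, T k := step1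
    _ = ∑ c ∈ sC, ∑ a ∈ sA, ∑ b ∈ sB, T (a, b, c) := step2
    _ ≤ ∑ c ∈ sC, ∫ z in cellPi d' h c, e z ∂ν := Finset.sum_le_sum fun c _ => main c
    _ = ∫ z in ⋃ c ∈ sC, cellPi d' h c, e z ∂ν :=
        (integral_biUnion_finset sC (fun c _ => measurableSet_cellPi d' h c)
          (fun c _ c' _ hne => cellPi_disjoint hh hne) (fun c _ => eint.integrableOn)).symm
    _ ≤ ∫ z, e z ∂ν :=
        setIntegral_le_integral eint (Filter.Eventually.of_forall fun z => enonneg z)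
    _ ≤ Cstar * h := hLip'
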